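/- Let G be a star with center vertex v on finite vertex set V, colored by col : V → C with |C| ≥ 2, let ℓ ≥ 1, and let X ⊆ V with v ∈ X and Y := V \ X. Let c₁ be a color maximizing cv_c(V) and let c₂ ≠ c₁ be a color maximizing cv_c(V) among colors different from c₁; assume cv_{c₁}(X) ≤ cv_{c₂}(V) + ℓ. Let c*₁ be a color maximizing cv_c(X), and let c*₂ ≠ c*₁ be a color maximizing cv_c(X) among colors c' ≠ c*₁ satisfying cv_{c'}(V) ≥ cv_{c*₁}(X) − ℓ. Set b_l := max(0, cv_{c₁}(V) − cv_{c₂}(V) − ℓ) and b_u := max(0, cv_{c*₁}(X) − cv_{c*₂}(X) − ℓ). Then for every positive integer k, there exists a partition of V into k nonempty ℓ-fair parts, each inducing a connected subgraph of G and with all vertices of X contained in a single part, if and only if b_l + 1 ≤ k ≤ |Y| + 1 − b_u. (This holds for any choice of the maximizers c₁, c₂, c*₁, c*₂ when there are ties.) -/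
import Mathlib


/-- Number of vertices of `W` having color `c`. -/
noncomputable def cv {V C : Type*} (col : V → C) (W : Set V) (c : C) : ℕ :=
  (W ∩ col ⁻¹' {c}).ncard

/-- Margin of victory of `W`: largest entry of the color-count vector minus the
second-largest entry (over the remaining colors); `|W|` if there is only one color. -/
noncomputable def MOV {V C : Type*} [Fintype C] [DecidableEq C] (col : V → C) (W : Set V) : ℕ :=
  if h : Fintype.card C ≤ 1 then W.ncard
  else
    (Finset.univ.sup fun c => cv col W c) -
      Finset.univ.inf'
        (Finset.univ_nonempty_iff.mpr (Fintype.card_pos_iff.mp (by omega)))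
        (fun c => (Finset.univ.erase c).sup fun c' => cv col W c')

section Helpers

variable {V C : Type*} [Fintype V] [Fintype C] [DecidableEq C]

/-- A fairness certificate: a maximal color `c` and a distinct color `c'` within `ℓ` of it. -/
def FairCert (col : V → C) (W : Set V) (ℓ : ℕ) : Prop :=
  ∃ c c', c ≠ c' ∧ (∀ d, cv col W d ≤ cv col W c) ∧ cv col W c ≤ cv col W c' + ℓ

lemma cv_mono (col : V → C) {A B : Set V} (h : A ⊆ B) (c : C) :
    cv col A c ≤ cv col B c :=
  Set.ncard_le_ncard (Set.inter_subset_inter_left _ h) (Set.toFinite _)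

lemma cv_union (col : V → C) {A B : Set V} (h : Disjoint A B) (c : C) :
    cv col (A ∪ B) c = cv col A c + cv col B c := by
  unfold cv
  rw [Set.union_inter_distrib_right]
  exact Set.ncard_union_eq
    (h.mono Set.inter_subset_left Set.inter_subset_left) (Set.toFinite _) (Set.toFinite _)

lemma cv_le_ncard (col : V → C) (A : Set V) (c : C) : cv col A c ≤ A.ncard :=
  Set.ncard_le_ncard Set.inter_subset_left (Set.toFinite _)

lemma cv_singleton (col : V → C) (u : V) (c : C) :
    cv col {u} c = if col u = c then 1 else 0 := by
  unfold cv
  by_cases h : col u = c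
  · simp [h, Set.inter_eq_self_of_subset_left, Set.singleton_subset_iff]
  · have : ({u} : Set V) ∩ col ⁻¹' {c} = ∅ := by
      ext x; simp only [Set.mem_inter_iff, Set.mem_singleton_iff, Set.mem_preimage,
        Set.mem_empty_iff_false, iff_false, not_and]
      rintro rfl; exact h
    simp [this, h]

lemma cv_eq_zero (col : V → C) {A : Set V} {c : C} (h : ∀ u ∈ A, col u ≠ c) :
    cv col A c = 0 := by
  unfold cv
  have : A ∩ col ⁻¹' {c} = ∅ := by
    ext x; simp only [Set.mem_inter_iff, Set.mem_preimage, Set.mem_singleton_iff,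
      Set.mem_empty_iff_false, iff_false, not_and]
    exact h x
  simp [this]

lemma cv_eq_ncard (col : V → C) {A : Set V} {c : C} (h : ∀ u ∈ A, col u = c) :
    cv col A c = A.ncard := by
  unfold cv
  congr 1
  exact Set.inter_eq_self_of_subset_left fun x hx => h x hx

lemma mov_le_iff (col : V → C) (W : Set V) (hC : 2 ≤ Fintype.card C) (ℓ : ℕ) :
    MOV col W ≤ ℓ ↔ FairCert col W ℓ := by
  have hC1 : ¬ Fintype.card C ≤ 1 := by omega
  have hne : (Finset.univ : Finset C).Nonempty :=
    Finset.univ_nonempty_iff.mpr (Fintype.card_pos_iff.mp (by omega))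
  rw [MOV, dif_neg hC1]
  set z : C → ℕ := fun c => cv col W c with hz
  set f : C → ℕ := fun c => (Finset.univ.erase c).sup z with hf
  constructor
  · intro h
    obtain ⟨c, -, hc⟩ := Finset.exists_mem_eq_sup Finset.univ hne z
    have herase : (Finset.univ.erase c).Nonempty := by
      have : 1 ≤ (Finset.univ.erase c).card := by
        rw [Finset.card_erase_of_mem (Finset.mem_univ c), Finset.card_univ]; omega
      exact Finset.card_pos.mp (by omega)
    obtain ⟨c', hc'mem, hc'⟩ := Finset.exists_mem_eq_sup _ herase z
    refine ⟨c, c', (Finset.ne_of_mem_erase hc'mem).symm, ?_, ?_⟩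
    · intro d
      show z d ≤ z c
      rw [← hc]
      exact Finset.le_sup (Finset.mem_univ d)
    · show z c ≤ z c' + ℓ
      have h1 : Finset.univ.inf' hne f ≤ f c := Finset.inf'_le _ (Finset.mem_univ c)
      have h2 : z c ≤ Finset.univ.inf' hne f + ℓ := by
        rw [← hc]; omega
      have h3 : f c = z c' := hc'
      omega
  · rintro ⟨c, c', hcc', hmax, hgap⟩
    have hsup : Finset.univ.sup z = z c :=
      le_antisymm (Finset.sup_le fun d _ => hmax d) (Finset.le_sup (Finset.mem_univ c))
    obtain ⟨d₀, -, hd₀⟩ := Finset.exists_mem_eq_inf' hne f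
    have e1 : z c = cv col W c := rfl
    have e2 : z c' = cv col W c' := rfl
    have : z c ≤ f d₀ + ℓ := by
      by_cases hcd : c' = d₀
      · have hmem : c ∈ Finset.univ.erase d₀ := by
          apply Finset.mem_erase_of_ne_of_mem _ (Finset.mem_univ c)
          rw [← hcd]; exact hcc'
        have : z c ≤ f d₀ := Finset.le_sup hmem
        omega
      · have hmem : c' ∈ Finset.univ.erase d₀ :=
          Finset.mem_erase_of_ne_of_mem hcd (Finset.mem_univ c')
        have : z c' ≤ f d₀ := Finset.le_sup hmem
        omega
    rw [hsup, hd₀]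
    omega

lemma star_connected_of_mem (G : SimpleGraph V) (v : V)
    (hstar : ∀ a b : V, G.Adj a b ↔ (a ≠ b ∧ (a = v ∨ b = v)))
    {P : Set V} (hv : v ∈ P) : (G.induce P).Connected := by
  rw [SimpleGraph.connected_iff]
  refine ⟨?_, ⟨⟨v, hv⟩⟩⟩
  have key : ∀ a : P, (G.induce P).Reachable a ⟨v, hv⟩ := by
    intro a
    by_cases h : (a : V) = v
    · have : a = ⟨v, hv⟩ := Subtype.ext h
      rw [this]
    · refine SimpleGraph.Adj.reachable ?_
      show G.Adj (a : V) v
      rw [hstar]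
      exact ⟨h, Or.inr rfl⟩
  intro a b
  exact (key a).trans (key b).symm

lemma star_singleton_of_notMem (G : SimpleGraph V) (v : V)
    (hstar : ∀ a b : V, G.Adj a b ↔ (a ≠ b ∧ (a = v ∨ b = v)))
    {P : Set V} (hconn : (G.induce P).Connected) (hv : v ∉ P) : ∃ u, P = {u} := by
  obtain ⟨⟨u, hu⟩⟩ := hconn.nonempty
  refine ⟨u, Set.eq_singleton_iff_unique_mem.mpr ⟨hu, fun a ha => ?_⟩⟩
  obtain ⟨w⟩ := hconn.preconnected ⟨a, ha⟩ ⟨u, hu⟩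
  cases w with
  | nil => rfl
  | cons h _ =>
    exfalso
    rename_i c _
    have hadj : G.Adj a (c : V) := h
    rw [hstar] at hadj
    rcases hadj.2 with h1 | h1
    · exact hv (h1 ▸ ha)
    · exact hv (h1 ▸ c.2)

lemma singleton_connected (G : SimpleGraph V) (u : V) :
    (G.induce ({u} : Set V)).Connected := by
  rw [SimpleGraph.connected_iff]
  refine ⟨?_, ⟨⟨u, rfl⟩⟩⟩
  intro a b
  have : a = b := Subtype.ext (by
    have ha := a.2; have hb := b.2
    simp only [Set.mem_singleton_iff] at ha hb
    rw [ha, hb])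
  rw [this]

lemma singleton_faircert (col : V → C) (hC : 2 ≤ Fintype.card C) {ℓ : ℕ} (hℓ : 1 ≤ ℓ)
    (u : V) : FairCert col ({u} : Set V) ℓ := by
  obtain ⟨c', hc'⟩ := Fintype.exists_ne_of_one_lt_card (by omega) (col u)
  refine ⟨col u, c', hc'.symm, ?_, ?_⟩
  · intro d
    rw [cv_singleton, cv_singleton, if_pos rfl]
    split <;> omega
  · rw [cv_singleton, if_pos rfl]
    omega

/-- The key construction: for each `m` in the feasible interval there is a fair
extension `X ∪ S` with `S ⊆ Xᶜ` of size `m`. -/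
lemma exists_fair_extension (col : V → C) {ℓ : ℕ} (hℓ : 1 ≤ ℓ) (X : Set V)
    (c₁ c₂ cs₁ cs₂ : C)
    (hc₁ : ∀ c, cv col Set.univ c ≤ cv col Set.univ c₁)
    (hc₂ne : c₂ ≠ c₁)
    (hc₂ : ∀ c, c ≠ c₁ → cv col Set.univ c ≤ cv col Set.univ c₂)
    (hcs₁ : ∀ c, cv col X c ≤ cv col X cs₁)
    (hcs₂ne : cs₂ ≠ cs₁)
    (hcs₂mem : cv col X cs₁ ≤ cv col Set.univ cs₂ + ℓ)
    (m : ℕ)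
    (hm1 : cv col X cs₁ - cv col X cs₂ - ℓ ≤ m)
    (hm2 : m + (cv col Set.univ c₁ - cv col Set.univ c₂ - ℓ) ≤ Xᶜ.ncard) :
    ∃ S : Set V, S ⊆ Xᶜ ∧ S.ncard = m ∧ FairCert col (X ∪ S) ℓ := by
  set Y : Set V := Xᶜ with hY
  have hXY : Disjoint X Y := disjoint_compl_right
  have huniv : ∀ d, cv col Set.univ d = cv col X d + cv col Y d := by
    intro d
    rw [← cv_union col hXY, Set.union_compl_self]
  suffices H : ∀ m : ℕ, (cv col X cs₁ - cv col X cs₂ - ℓ ≤ m) →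
      (m + (cv col Set.univ c₁ - cv col Set.univ c₂ - ℓ) ≤ Y.ncard) →
      ∃ S : Set V, S ⊆ Y ∧ S.ncard = m ∧ FairCert col (X ∪ S) ℓ by
    exact H m hm1 hm2
  intro m
  induction m with
  | zero =>
    intro h1 _h2
    refine ⟨∅, Set.empty_subset _, Set.ncard_empty _, ?_⟩
    rw [Set.union_empty]
    exact ⟨cs₁, cs₂, hcs₂ne.symm, hcs₁, by omega⟩
  | succ m ih =>
    intro h1 h2
    by_cases hbu : cv col X cs₁ - cv col X cs₂ - ℓ ≤ m
    · -- inductive step: extend a fair S of size m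
      obtain ⟨S, hSY, hScard, a, a', haa', hmax, hgap⟩ := ih hbu (by omega)
      set T : Set V := Y \ S with hT
      have hTcard : T.ncard = Y.ncard - S.ncard := Set.ncard_diff hSY
      have hTpos : 1 ≤ T.ncard := by omega
      have hTne : T.Nonempty := Set.nonempty_of_ncard_ne_zero (by omega)
      have hXS_T : Disjoint (X ∪ S) T := by
        apply Set.disjoint_union_left.mpr
        exact ⟨hXY.mono_right Set.diff_subset, Set.disjoint_sdiff_right⟩
      have hXS_T' : X ∪ S ∪ T = Set.univ := by
        rw [Set.union_assoc, Set.union_diff_cancel hSY, Set.union_compl_self]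
      have hins : ∀ u ∈ T, ∀ d,
          cv col (X ∪ insert u S) d = cv col (X ∪ S) d + (if col u = d then 1 else 0) := by
        intro u hu d
        have huS : u ∉ X ∪ S := fun h => (hXS_T.ne_of_mem h hu) rfl
        have : X ∪ insert u S = (X ∪ S) ∪ {u} := by
          ext x
          simp only [Set.mem_union, Set.mem_insert_iff, Set.mem_singleton_iff]
          tauto
        rw [this, cv_union col (Set.disjoint_singleton_right.mpr huS), cv_singleton]
      have hinscard : ∀ u ∈ T, (insert u S).ncard = m + 1 := by
        intro u hu
        rw [Set.ncard_insert_of_notMem (fun h => hu.2 h) (Set.toFinite _), hScard]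
      have hinssub : ∀ u ∈ T, insert u S ⊆ Y := by
        intro u hu x hx
        rcases hx with rfl | hx
        · exact hu.1
        · exact hSY hx
      by_cases hTcol : ∃ u ∈ T, col u ≠ a
      · obtain ⟨u, huT, hua⟩ := hTcol
        refine ⟨insert u S, hinssub u huT, hinscard u huT, ?_⟩
        have hz := hins u huT
        rcases lt_or_eq_of_le (hmax (col u)) with hlt | heq
        · refine ⟨a, a', haa', ?_, ?_⟩
          · intro d
            have h1 := hz d
            have h2 := hz a
            have h3 := hmax d
            rw [if_neg hua] at h2
            rw [h1, h2]
            split_ifs with p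
            · rw [p] at hlt; omega
            · omega
          · have ha1 := hz a
            have ha2 := hz a'
            rw [if_neg hua] at ha1
            rw [ha1, ha2]
            split_ifs <;> omega
        · refine ⟨col u, a, hua, ?_, ?_⟩
          · intro d
            have hd1 := hz d
            have hd2 := hz (col u)
            have h3 := hmax d
            rw [if_pos rfl] at hd2
            rw [hd1, hd2]
            split_ifs with p
            · subst p; omega
            · omega
          · have hg1 := hz (col u)
            have hg2 := hz a
            rw [if_pos rfl] at hg1
            rw [if_neg hua] at hg2
            rw [hg1, hg2]
            omega
      · push_neg at hTcol
        obtain ⟨u, huT⟩ := hTne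
        have hcu : col u = a := hTcol u huT
        have hTa : cv col T a = T.ncard := cv_eq_ncard col hTcol
        have hsplit : ∀ d, cv col Set.univ d = cv col (X ∪ S) d + cv col T d := by
          intro d
          rw [← cv_union col hXS_T, hXS_T']
        have hTz : ∀ d, d ≠ a → cv col T d = 0 := fun d hd =>
          cv_eq_zero col fun x hx h => hd (((hTcol x hx).symm.trans h).symm)
        have hac₁ : a = c₁ := by
          by_contra hne'
          have hA : cv col (X ∪ S) c₁ = cv col Set.univ c₁ := by
            rw [hsplit c₁, hTz c₁ (fun h => hne' h.symm), Nat.add_zero]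
          have hB : cv col Set.univ a = cv col (X ∪ S) a + T.ncard := by
            rw [hsplit a, hTa]
          have hC' := hc₁ a
          have hD := hmax c₁
          omega
        have hcu' : col u = c₁ := hcu.trans hac₁
        have hTz' : ∀ d, d ≠ c₁ → cv col T d = 0 := fun d hd =>
          hTz d (fun h => hd (h.trans hac₁))
        have hTa' : cv col T c₁ = T.ncard := by rw [← hac₁]; exact hTa
        have hmax' : ∀ d, cv col (X ∪ S) d ≤ cv col (X ∪ S) c₁ := by
          intro d
          rw [← hac₁]
          exact hmax d
        refine ⟨insert u S, hinssub u huT, hinscard u huT, c₁, c₂, hc₂ne.symm, ?_, ?_⟩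
        · intro d
          have hd1 := hins u huT d
          have hd2 := hins u huT c₁
          rw [if_pos hcu'] at hd2
          rw [hd1, hd2]
          by_cases hd : d = c₁
          · subst hd
            split_ifs <;> omega
          · rw [if_neg (fun h : col u = d => hd ((hcu'.symm.trans h).symm.symm ▸ (hcu'.symm.trans h).symm))]
            have h3 : cv col (X ∪ S) d = cv col Set.univ d := by
              rw [hsplit d, hTz' d hd, Nat.add_zero]
            have h4 := hc₂ d hd
            have h5 : cv col Set.univ c₂ = cv col (X ∪ S) c₂ := by
              rw [hsplit c₂, hTz' c₂ hc₂ne, Nat.add_zero]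
            have h6 := hmax' c₂
            omega
        · have hg2 := hins u huT c₁
          rw [if_pos hcu'] at hg2
          have hg3 := hins u huT c₂
          rw [if_neg (fun h : col u = c₂ => hc₂ne (h.symm.trans hcu'))] at hg3
          have h5 : cv col Set.univ c₂ = cv col (X ∪ S) c₂ := by
            rw [hsplit c₂, hTz' c₂ hc₂ne, Nat.add_zero]
          have h6 : cv col Set.univ c₁ = cv col (X ∪ S) c₁ + T.ncard := by
            rw [hsplit c₁, hTa']
          rw [hg2, hg3]
          omega
    · -- base case in disguise: m + 1 = b_u
      have hbu' : cv col X cs₁ - cv col X cs₂ - ℓ = m + 1 := by omega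
      have hYcs₂ : m + 1 ≤ cv col Y cs₂ := by
        have := huniv cs₂
        omega
      obtain ⟨S, hSsub, hScard⟩ :=
        Set.exists_subset_card_eq (n := m + 1) (by
          show m + 1 ≤ (Y ∩ col ⁻¹' {cs₂}).ncard
          exact hYcs₂)
      have hSY : S ⊆ Y := hSsub.trans Set.inter_subset_left
      have hScol : ∀ x ∈ S, col x = cs₂ := fun x hx => (hSsub hx).2
      have hXdisj : Disjoint X S := hXY.mono_right hSY
      have hXu : ∀ d, cv col (X ∪ S) d = cv col X d + cv col S d := fun d => cv_union col hXdisj d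
      have hS₂ : cv col S cs₂ = m + 1 := by rw [cv_eq_ncard col hScol, hScard]
      have hSz : ∀ d, d ≠ cs₂ → cv col S d = 0 := fun d hd =>
        cv_eq_zero col (fun x hx => by rw [hScol x hx]; exact fun h => hd h.symm)
      refine ⟨S, hSY, hScard, cs₁, cs₂, hcs₂ne.symm, ?_, ?_⟩
      · intro d
        have hd1 := hXu d
        have hd2 := hXu cs₁
        have h3 := hcs₁ d
        have h4 := hcs₁ cs₂
        rw [hSz cs₁ (fun h => hcs₂ne h.symm)] at hd2
        by_cases hd : d = cs₂
        · subst hd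
          rw [hd1, hS₂] at *
          omega
        · rw [hSz d hd] at hd1; omega
      · have hg1 := hXu cs₁
        have hg2 := hXu cs₂
        rw [hSz cs₁ (fun h => hcs₂ne h.symm)] at hg1
        rw [hS₂] at hg2
        omega

end Helpers

theorem stmt0 {V C : Type*} [Fintype V] [Fintype C] [DecidableEq C]
    (G : SimpleGraph V) (v : V)
    (hstar : ∀ a b : V, G.Adj a b ↔ (a ≠ b ∧ (a = v ∨ b = v)))
    (col : V → C) (hC : 2 ≤ Fintype.card C)
    (ℓ : ℕ) (hℓ : 1 ≤ ℓ)
    (X : Set V) (hvX : v ∈ X)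
    (c₁ c₂ cs₁ cs₂ : C)
    (hc₁ : ∀ c, cv col Set.univ c ≤ cv col Set.univ c₁)
    (hc₂ne : c₂ ≠ c₁)
    (hc₂ : ∀ c, c ≠ c₁ → cv col Set.univ c ≤ cv col Set.univ c₂)
    (hXbound : cv col X c₁ ≤ cv col Set.univ c₂ + ℓ)
    (hcs₁ : ∀ c, cv col X c ≤ cv col X cs₁)
    (hcs₂ne : cs₂ ≠ cs₁)
    (hcs₂mem : cv col X cs₁ ≤ cv col Set.univ cs₂ + ℓ)
    (hcs₂ : ∀ c, c ≠ cs₁ → cv col X cs₁ ≤ cv col Set.univ c + ℓ → cv col X c ≤ cv col X cs₂)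
    (k : ℕ) (hk : 1 ≤ k) :
    (∃ P : Fin k → Set V,
        (∀ i, (P i).Nonempty) ∧
        (∀ i j, i ≠ j → Disjoint (P i) (P j)) ∧
        (⋃ i, P i) = Set.univ ∧
        (∀ i, (G.induce (P i)).Connected) ∧
        (∀ i, MOV col (P i) ≤ ℓ) ∧
        (∃ i, X ⊆ P i)) ↔
      ((cv col Set.univ c₁ - cv col Set.univ c₂ - ℓ) + 1 ≤ k ∧
        k + (cv col X cs₁ - cv col X cs₂ - ℓ) ≤ Xᶜ.ncard + 1) := by
  set Y : Set V := Xᶜ with hY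
  have hXY : Disjoint X Y := disjoint_compl_right
  constructor
  · rintro ⟨P, hne, hdisj, hcover, hconn, hmov, i₀, hXP⟩
    set W : Set V := P i₀ with hW
    -- every other part is a singleton
    have hsingle : ∀ j : Fin k, j ≠ i₀ → ∃ u, P j = {u} := by
      intro j hj
      apply star_singleton_of_notMem G v hstar (hconn j)
      intro hv
      exact (hdisj j i₀ hj).ne_of_mem hv (hXP hvX) rfl
    choose g hg using fun (j : {j : Fin k // j ≠ i₀}) => hsingle j j.2
    -- T := complement of W
    set T : Set V := Wᶜ with hT
    have hTrange : T = Set.range g := by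
      ext u
      constructor
      · intro hu
        have : u ∈ ⋃ i, P i := by rw [hcover]; trivial
        obtain ⟨i, hi⟩ := Set.mem_iUnion.mp this
        have hine : i ≠ i₀ := by
          rintro rfl; exact hu hi
        have := hg ⟨i, hine⟩
        rw [this] at hi
        exact ⟨⟨i, hine⟩, hi.symm⟩
      · rintro ⟨j, rfl⟩
        have hgj : g j ∈ P j := by rw [hg j]; rfl
        intro hmem
        exact (hdisj j i₀ j.2).ne_of_mem hgj hmem rfl
    have hginj : Function.Injective g := by
      intro j j' h
      have h1 : g j ∈ P j := by rw [hg j]; rfl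
      have h2 : g j' ∈ P j' := by rw [hg j']; rfl
      by_contra hne'
      have : (j : Fin k) ≠ (j' : Fin k) := fun h' => hne' (Subtype.ext h')
      exact (hdisj j j' this).ne_of_mem h1 h2 h
    have hTcard : T.ncard = k - 1 := by
      rw [hTrange, ← Nat.card_coe_set_eq, Nat.card_range_of_injective hginj]
      rw [Nat.card_eq_fintype_card]
      have := Fintype.card_subtype_compl (fun j : Fin k => j = i₀)
      simp [Fintype.card_subtype_eq] at this
      simpa using this
    -- S := W \ X
    set S : Set V := W \ X with hS
    have hSY : S ⊆ Y := fun x hx => hx.2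
    have hWXS : W = X ∪ S := by
      rw [hS, Set.union_diff_cancel' (le_refl X) hXP]
    have hYST : Y = S ∪ T := by
      ext u
      constructor
      · intro hu
        by_cases h : u ∈ W
        · exact Or.inl ⟨h, hu⟩
        · exact Or.inr h
      · rintro (hu | hu)
        · exact hSY hu
        · intro hX; exact hu (hXP hX)
    have hSTdisj : Disjoint S T := by
      rw [Set.disjoint_right]
      intro x hx hxS
      exact hx hxS.1
    have hYcard : Y.ncard = S.ncard + T.ncard := by
      rw [hYST, Set.ncard_union_eq hSTdisj (Set.toFinite _) (Set.toFinite _)]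
    -- the fairness certificate on W
    obtain ⟨a, a', haa', hmax, hgap⟩ := (mov_le_iff col W hC ℓ).mp (hmov i₀)
    have hsplit : ∀ d, cv col Set.univ d = cv col W d + cv col T d := by
      intro d
      rw [← cv_union col (disjoint_compl_right : Disjoint W Wᶜ), Set.union_compl_self]
    have hWsplit : ∀ d, cv col W d = cv col X d + cv col S d := by
      intro d
      rw [hWXS]; exact cv_union col (hXY.mono_right hSY) d
    have hTle : ∀ d, cv col T d ≤ T.ncard := fun d => cv_le_ncard col T d
    have hSle : ∀ d, cv col S d ≤ S.ncard := fun d => cv_le_ncard col S d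
    -- key1 : n₁ ≤ n₂ + ℓ + |T|
    have key1 : cv col Set.univ c₁ ≤ cv col Set.univ c₂ + ℓ + T.ncard := by
      by_cases hac : a = c₁
      · subst hac
        have h1 := hsplit a
        have h2 := hTle a
        have h3 : cv col W a' ≤ cv col Set.univ a' := cv_mono col (Set.subset_univ W) a'
        have h4 := hc₂ a' (fun h => haa' h.symm)
        omega
      · have h1 := hsplit c₁
        have h2 := hTle c₁
        have h3 := hmax c₁
        have h4 : cv col W a ≤ cv col Set.univ a := cv_mono col (Set.subset_univ W) a
        have h5 := hc₂ a hac
        omega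
    -- key2 : x₁ ≤ x₂ + ℓ + |S|
    have key2 : cv col X cs₁ ≤ cv col X cs₂ + ℓ + S.ncard := by
      have hXW : ∀ d, cv col X d ≤ cv col W d := fun d => cv_mono col hXP d
      obtain ⟨c'', hc''ne, hc''ge⟩ : ∃ c'', c'' ≠ cs₁ ∧ cv col X cs₁ ≤ cv col W c'' + ℓ := by
        by_cases hacs : a = cs₁
        · refine ⟨a', fun h => haa' (h ▸ hacs.symm ▸ rfl), ?_⟩
          have := hXW cs₁
          rw [← hacs] at *
          omega
        · exact ⟨a, hacs, le_trans (le_trans (hXW cs₁) (hmax cs₁)) (by omega)⟩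
      have h1 : cv col W c'' ≤ cv col Set.univ c'' := cv_mono col (Set.subset_univ W) c''
      have h2 : cv col X c'' ≤ cv col X cs₂ := hcs₂ c'' hc''ne (by omega)
      have h3 := hWsplit c''
      have h4 := hSle c''
      omega
    constructor
    · omega
    · omega
  · rintro ⟨hlow, hhigh⟩
    have hYn : Y.ncard = Xᶜ.ncard := by rw [hY]
    have hkY : k ≤ Y.ncard + 1 := by omega
    set m : ℕ := Y.ncard + 1 - k with hm
    have hm1 : cv col X cs₁ - cv col X cs₂ - ℓ ≤ m := by omega
    have hm2 : m + (cv col Set.univ c₁ - cv col Set.univ c₂ - ℓ) ≤ Y.ncard := by omega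
    obtain ⟨S, hSY, hScard, hfair⟩ :=
      exists_fair_extension col hℓ X c₁ c₂ cs₁ cs₂ hc₁ hc₂ne hc₂ hcs₁ hcs₂ne hcs₂mem m hm1 hm2
    set T : Set V := Y \ S with hT
    have hTcard : T.ncard = k - 1 := by
      rw [hT, Set.ncard_diff hSY]
      omega
    haveI : Fintype T := (Set.toFinite T).fintype
    have hTfin : Fintype.card T = k - 1 := by
      rw [← Nat.card_eq_fintype_card, Nat.card_coe_set_eq, hTcard]
    let e : Fin (k - 1) ≃ T := (Fintype.equivFinOfCardEq hTfin).symm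
    let P : Fin k → Set V := fun i =>
      if h : (i : ℕ) = 0 then X ∪ S else {(e ⟨(i : ℕ) - 1, by omega⟩ : V)}
    have hP0 : P ⟨0, by omega⟩ = X ∪ S := by simp [P]
    have hPne0 : ∀ (i : Fin k) (h : (i : ℕ) ≠ 0), P i = {(e ⟨(i : ℕ) - 1, by omega⟩ : V)} := by
      intro i h; simp [P, h]
    have hTXS : Disjoint (X ∪ S) T := by
      apply Set.disjoint_union_left.mpr
      refine ⟨hXY.mono_right Set.diff_subset, Set.disjoint_sdiff_right⟩
    refine ⟨P, ?_, ?_, ?_, ?_, ?_, ?_⟩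
    · intro i
      by_cases h : (i : ℕ) = 0
      · have : i = ⟨0, by omega⟩ := Fin.ext h
        rw [this, hP0]
        exact ⟨v, Or.inl hvX⟩
      · rw [hPne0 i h]
        exact ⟨_, rfl⟩
    · intro i j hij
      by_cases hi : (i : ℕ) = 0 <;> by_cases hj : (j : ℕ) = 0
      · exact absurd (Fin.ext (hi.trans hj.symm)) hij
      · have : i = ⟨0, by omega⟩ := Fin.ext hi
        rw [this, hP0, hPne0 j hj]
        rw [Set.disjoint_singleton_right]
        exact fun h => (hTXS.ne_of_mem h (e _).2) rfl
      · have : j = ⟨0, by omega⟩ := Fin.ext hj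
        rw [this, hP0, hPne0 i hi]
        rw [Set.disjoint_singleton_left]
        exact fun h => (hTXS.ne_of_mem h (e _).2) rfl
      · rw [hPne0 i hi, hPne0 j hj, Set.disjoint_singleton]
        intro h
        have h1 : (⟨(i : ℕ) - 1, by omega⟩ : Fin (k - 1)) = ⟨(j : ℕ) - 1, by omega⟩ :=
          e.injective (Subtype.ext h)
        have h2 : (i : ℕ) - 1 = (j : ℕ) - 1 := congrArg Fin.val h1
        have : (i : ℕ) = (j : ℕ) := by omega
        exact hij (Fin.ext this)
    · ext u
      simp only [Set.mem_iUnion, Set.mem_univ, iff_true]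
      by_cases hu : u ∈ X ∪ S
      · exact ⟨⟨0, by omega⟩, by rw [hP0]; exact hu⟩
      · have huT : u ∈ T := by
          constructor
          · intro hX; exact hu (Or.inl hX)
          · intro hS; exact hu (Or.inr hS)
        set j := e.symm ⟨u, huT⟩ with hj
        refine ⟨⟨(j : ℕ) + 1, by omega⟩, ?_⟩
        rw [hPne0 ⟨(j : ℕ) + 1, by omega⟩ (by simp)]
        have : (⟨(j : ℕ) + 1 - 1, by omega⟩ : Fin (k - 1)) = j := Fin.ext (by simp)
        rw [this, hj, Equiv.apply_symm_apply]
        rfl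
    · intro i
      by_cases h : (i : ℕ) = 0
      · have : i = ⟨0, by omega⟩ := Fin.ext h
        rw [this, hP0]
        exact star_connected_of_mem G v hstar (Or.inl hvX)
      · rw [hPne0 i h]
        exact singleton_connected G _
    · intro i
      rw [mov_le_iff col _ hC ℓ]
      by_cases h : (i : ℕ) = 0
      · have : i = ⟨0, by omega⟩ := Fin.ext h
        rw [this, hP0]
        exact hfair
      · rw [hPne0 i h]
        exact singleton_faircert col hC hℓ _
    · exact ⟨⟨0, by omega⟩, by rw [hP0]; exact Set.subset_union_left⟩
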